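/- Along any solution x(t) of dx/dt = F(x) with all coordinates positive, d/dt L(x(t)) = ∑_{i=1}^3 x_i(t) · (F_i(x(t))/x_i(t))^2 ≥ 0, with equality at time t if and only if F(x(t)) = 0. -/

import Mathlib

noncomputable def symF (a β : ℝ) (i : Fin 3) (x₁ x₂ x₃ : ℝ) : ℝ :=
  let S := x₁ ^ β + x₂ ^ β + x₃ ^ β
  match i with
  | 0 => (x₁ ^ β + a * (x₂ ^ β + x₃ ^ β)) / ((1 + 2 * a) * S) - x₁
  | 1 => (x₂ ^ β + a * (x₁ ^ β + x₃ ^ β)) / ((1 + 2 * a) * S) - x₂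
  | 2 => (x₃ ^ β + a * (x₁ ^ β + x₂ ^ β)) / ((1 + 2 * a) * S) - x₃

noncomputable def L (a β x₁ x₂ x₃ : ℝ) : ℝ :=
  -(x₁ + x₂ + x₃) + (1 / (2 * a + 1)) *
    (a * Real.log (x₁ * x₂ * x₃) - ((a - 1) / β) * Real.log (x₁ ^ β + x₂ ^ β + x₃ ^ β))

set_option maxHeartbeats 1000000 in
lemma aux_deriv_identity (a β y₁ y₂ y₃ F₁ F₂ F₃ p₁ p₂ p₃ : ℝ)
    (hy1 : y₁ ≠ 0) (hy2 : y₂ ≠ 0) (hy3 : y₃ ≠ 0) (hβ : β ≠ 0)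
    (ha : 2 * a + 1 ≠ 0) (hS : p₁ + p₂ + p₃ ≠ 0)
    (h1 : F₁ = (p₁ + a * (p₂ + p₃)) / ((1 + 2 * a) * (p₁ + p₂ + p₃)) - y₁)
    (h2 : F₂ = (p₂ + a * (p₁ + p₃)) / ((1 + 2 * a) * (p₁ + p₂ + p₃)) - y₂)
    (h3 : F₃ = (p₃ + a * (p₁ + p₂)) / ((1 + 2 * a) * (p₁ + p₂ + p₃)) - y₃) :
    -(F₁ + F₂ + F₃) + (1 / (2 * a + 1)) *
      (a * (((F₁ * y₂ + y₁ * F₂) * y₃ + y₁ * y₂ * F₃) / (y₁ * y₂ * y₃)) -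
       ((a - 1) / β) *
         ((F₁ * β * (p₁ / y₁) + F₂ * β * (p₂ / y₂) + F₃ * β * (p₃ / y₃)) / (p₁ + p₂ + p₃)))
    = y₁ * (F₁ / y₁) ^ 2 + y₂ * (F₂ / y₂) ^ 2 + y₃ * (F₃ / y₃) ^ 2 := by
  have ha' : (1 + 2 * a) ≠ 0 := by intro h; apply ha; linarith
  have g1 : F₁ / y₁ = -1 + (1 / (2 * a + 1)) *
      (a / y₁ - (a - 1) * p₁ / (y₁ * (p₁ + p₂ + p₃))) := by
    rw [h1]; field_simp; ring
  have g2 : F₂ / y₂ = -1 + (1 / (2 * a + 1)) *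
      (a / y₂ - (a - 1) * p₂ / (y₂ * (p₁ + p₂ + p₃))) := by
    rw [h2]; field_simp; ring
  have g3 : F₃ / y₃ = -1 + (1 / (2 * a + 1)) *
      (a / y₃ - (a - 1) * p₃ / (y₃ * (p₁ + p₂ + p₃))) := by
    rw [h3]; field_simp; ring
  have r : y₁ * (F₁ / y₁) ^ 2 + y₂ * (F₂ / y₂) ^ 2 + y₃ * (F₃ / y₃) ^ 2
      = F₁ * (F₁ / y₁) + F₂ * (F₂ / y₂) + F₃ * (F₃ / y₃) := by
    field_simp
  rw [r, g1, g2, g3]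
  field_simp
  ring

theorem L_increases_along_flow (a β : ℝ) (ha : 0 < a) (hβ : 0 < β)
    (x₁ x₂ x₃ : ℝ → ℝ) (t : ℝ)
    (h1 : 0 < x₁ t) (h2 : 0 < x₂ t) (h3 : 0 < x₃ t)
    (hd1 : HasDerivAt x₁ (symF a β 0 (x₁ t) (x₂ t) (x₃ t)) t)
    (hd2 : HasDerivAt x₂ (symF a β 1 (x₁ t) (x₂ t) (x₃ t)) t)
    (hd3 : HasDerivAt x₃ (symF a β 2 (x₁ t) (x₂ t) (x₃ t)) t) :
    HasDerivAt (fun s => L a β (x₁ s) (x₂ s) (x₃ s))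
      (x₁ t * (symF a β 0 (x₁ t) (x₂ t) (x₃ t) / x₁ t) ^ 2 +
       x₂ t * (symF a β 1 (x₁ t) (x₂ t) (x₃ t) / x₂ t) ^ 2 +
       x₃ t * (symF a β 2 (x₁ t) (x₂ t) (x₃ t) / x₃ t) ^ 2) t ∧
    0 ≤ x₁ t * (symF a β 0 (x₁ t) (x₂ t) (x₃ t) / x₁ t) ^ 2 +
       x₂ t * (symF a β 1 (x₁ t) (x₂ t) (x₃ t) / x₂ t) ^ 2 +
       x₃ t * (symF a β 2 (x₁ t) (x₂ t) (x₃ t) / x₃ t) ^ 2 ∧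
    (x₁ t * (symF a β 0 (x₁ t) (x₂ t) (x₃ t) / x₁ t) ^ 2 +
       x₂ t * (symF a β 1 (x₁ t) (x₂ t) (x₃ t) / x₂ t) ^ 2 +
       x₃ t * (symF a β 2 (x₁ t) (x₂ t) (x₃ t) / x₃ t) ^ 2 = 0 ↔
      ∀ i : Fin 3, symF a β i (x₁ t) (x₂ t) (x₃ t) = 0) := by
  have hy1 := h1.ne'
  have hy2 := h2.ne'
  have hy3 := h3.ne'
  have hp1 : (0:ℝ) < x₁ t ^ β := Real.rpow_pos_of_pos h1 β
  have hp2 : (0:ℝ) < x₂ t ^ β := Real.rpow_pos_of_pos h2 β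
  have hp3 : (0:ℝ) < x₃ t ^ β := Real.rpow_pos_of_pos h3 β
  have hS : (0:ℝ) < x₁ t ^ β + x₂ t ^ β + x₃ t ^ β := by positivity
  have ha1 : (1 + 2 * a) ≠ 0 := by linarith
  have ha2 : (2 * a + 1) ≠ 0 := by linarith
  set F₁ := symF a β 0 (x₁ t) (x₂ t) (x₃ t) with hF₁
  set F₂ := symF a β 1 (x₁ t) (x₂ t) (x₃ t) with hF₂
  set F₃ := symF a β 2 (x₁ t) (x₂ t) (x₃ t) with hF₃
  refine ⟨?_, by positivity, ?_⟩
  · -- the derivative computation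
    have d1 : HasDerivAt (fun s => x₁ s ^ β) (F₁ * β * x₁ t ^ (β - 1)) t :=
      hd1.rpow_const (Or.inl hy1)
    have d2 : HasDerivAt (fun s => x₂ s ^ β) (F₂ * β * x₂ t ^ (β - 1)) t :=
      hd2.rpow_const (Or.inl hy2)
    have d3 : HasDerivAt (fun s => x₃ s ^ β) (F₃ * β * x₃ t ^ (β - 1)) t :=
      hd3.rpow_const (Or.inl hy3)
    have dS : HasDerivAt (fun s => x₁ s ^ β + x₂ s ^ β + x₃ s ^ β)
        (F₁ * β * x₁ t ^ (β - 1) + F₂ * β * x₂ t ^ (β - 1) + F₃ * β * x₃ t ^ (β - 1)) t :=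
      (d1.add d2).add d3
    have dlogS : HasDerivAt (fun s => Real.log (x₁ s ^ β + x₂ s ^ β + x₃ s ^ β))
        ((F₁ * β * x₁ t ^ (β - 1) + F₂ * β * x₂ t ^ (β - 1) + F₃ * β * x₃ t ^ (β - 1)) /
          (x₁ t ^ β + x₂ t ^ β + x₃ t ^ β)) t := dS.log hS.ne'
    have dprod : HasDerivAt (fun s => x₁ s * x₂ s * x₃ s)
        ((F₁ * x₂ t + x₁ t * F₂) * x₃ t + x₁ t * x₂ t * F₃) t := (hd1.mul hd2).mul hd3
    have hprod : x₁ t * x₂ t * x₃ t ≠ 0 := by positivity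
    have dlogP : HasDerivAt (fun s => Real.log (x₁ s * x₂ s * x₃ s))
        (((F₁ * x₂ t + x₁ t * F₂) * x₃ t + x₁ t * x₂ t * F₃) / (x₁ t * x₂ t * x₃ t)) t :=
      dprod.log hprod
    have dsum : HasDerivAt (fun s => -(x₁ s + x₂ s + x₃ s)) (-(F₁ + F₂ + F₃)) t :=
      ((hd1.add hd2).add hd3).neg
    have big : HasDerivAt (fun s => L a β (x₁ s) (x₂ s) (x₃ s))
        (-(F₁ + F₂ + F₃) + (1 / (2 * a + 1)) *
          (a * (((F₁ * x₂ t + x₁ t * F₂) * x₃ t + x₁ t * x₂ t * F₃) / (x₁ t * x₂ t * x₃ t)) -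
           ((a - 1) / β) *
             ((F₁ * β * x₁ t ^ (β - 1) + F₂ * β * x₂ t ^ (β - 1) + F₃ * β * x₃ t ^ (β - 1)) /
               (x₁ t ^ β + x₂ t ^ β + x₃ t ^ β)))) t := by
      simp only [L]
      exact dsum.add (((dlogP.const_mul a).sub (dlogS.const_mul ((a - 1) / β))).const_mul
        (1 / (2 * a + 1)))
    have key : -(F₁ + F₂ + F₃) + (1 / (2 * a + 1)) *
          (a * (((F₁ * x₂ t + x₁ t * F₂) * x₃ t + x₁ t * x₂ t * F₃) / (x₁ t * x₂ t * x₃ t)) -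
           ((a - 1) / β) *
             ((F₁ * β * x₁ t ^ (β - 1) + F₂ * β * x₂ t ^ (β - 1) + F₃ * β * x₃ t ^ (β - 1)) /
               (x₁ t ^ β + x₂ t ^ β + x₃ t ^ β)))
        = x₁ t * (F₁ / x₁ t) ^ 2 + x₂ t * (F₂ / x₂ t) ^ 2 + x₃ t * (F₃ / x₃ t) ^ 2 := by
      have e1 : x₁ t ^ (β - 1) = x₁ t ^ β / x₁ t := by
        rw [Real.rpow_sub h1, Real.rpow_one]
      have e2 : x₂ t ^ (β - 1) = x₂ t ^ β / x₂ t := by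
        rw [Real.rpow_sub h2, Real.rpow_one]
      have e3 : x₃ t ^ (β - 1) = x₃ t ^ β / x₃ t := by
        rw [Real.rpow_sub h3, Real.rpow_one]
      rw [e1, e2, e3]
      exact aux_deriv_identity a β (x₁ t) (x₂ t) (x₃ t) F₁ F₂ F₃
        (x₁ t ^ β) (x₂ t ^ β) (x₃ t ^ β) hy1 hy2 hy3 hβ.ne' ha2 hS.ne'
        (by rw [hF₁]; simp only [symF]) (by rw [hF₂]; simp only [symF])
        (by rw [hF₃]; simp only [symF])
    rw [← key]
    exact big
  · constructor
    · intro h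
      have t1 : 0 ≤ x₁ t * (F₁ / x₁ t) ^ 2 := by positivity
      have t2 : 0 ≤ x₂ t * (F₂ / x₂ t) ^ 2 := by positivity
      have t3 : 0 ≤ x₃ t * (F₃ / x₃ t) ^ 2 := by positivity
      have e1 : x₁ t * (F₁ / x₁ t) ^ 2 = 0 := le_antisymm (by linarith) t1
      have e2 : x₂ t * (F₂ / x₂ t) ^ 2 = 0 := le_antisymm (by linarith) t2
      have e3 : x₃ t * (F₃ / x₃ t) ^ 2 = 0 := le_antisymm (by linarith) t3
      have g1 : F₁ = 0 := by
        rcases mul_eq_zero.mp e1 with h' | h'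
        · exact absurd h' hy1
        · have := pow_eq_zero_iff (n := 2) (by norm_num) |>.mp h'
          exact (div_eq_zero_iff.mp this).resolve_right hy1
      have g2 : F₂ = 0 := by
        rcases mul_eq_zero.mp e2 with h' | h'
        · exact absurd h' hy2
        · have := pow_eq_zero_iff (n := 2) (by norm_num) |>.mp h'
          exact (div_eq_zero_iff.mp this).resolve_right hy2
      have g3 : F₃ = 0 := by
        rcases mul_eq_zero.mp e3 with h' | h'
        · exact absurd h' hy3
        · have := pow_eq_zero_iff (n := 2) (by norm_num) |>.mp h'
          exact (div_eq_zero_iff.mp this).resolve_right hy3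
      intro i
      fin_cases i
      · exact g1
      · exact g2
      · exact g3
    · intro h
      have z1 : F₁ = 0 := h 0
      have z2 : F₂ = 0 := h 1
      have z3 : F₃ = 0 := h 2
      rw [z1, z2, z3]
      simp
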